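/- Let K ≥ 2 and d ≥ 1. Let w₁, …, w_K ∈ ℝ^d be unit vectors forming a simplex equiangular tight frame, i.e., ⟨w_i, w_j⟩ = -1/(K-1) for all i ≠ j. Fix a class k ∈ {1, …, K}, a vector h ∈ ℝ^d, a real δ > 0, and a vector η ∈ ℝ^d with ⟨w_j, η⟩ = 0 for all j ∈ {1, …, K}. Set h' = h + δ·w_k + η. Then [softmax(Wh')]_k > [softmax(Wh)]_k, where Wh ∈ ℝ^K denotes the logit vector with j-th entry ⟨w_j, h⟩. -/

import Mathlib

open scoped RealInnerProductSpace

/-- Let `w₁, …, w_K ∈ ℝ^d` be a simplex ETF (unit vectors with pairwise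
inner products `-1/(K-1)`). If `h' = h + δ•w_k + η` with `δ > 0` and `η` orthogonal to
every `w_j`, then the softmax probability of class `k` strictly increases:
`[softmax(Wh')]_k > [softmax(Wh)]_k`, where `(Wh)_j = ⟪w_j, h⟫`. -/
theorem softmax_increases_simplexETF
    (K d : ℕ) (hK : 2 ≤ K) (hd : 1 ≤ d)
    (w : Fin K → EuclideanSpace ℝ (Fin d))
    (hnorm : ∀ i, ‖w i‖ = 1)
    (hETF : ∀ i j, i ≠ j → ⟪w i, w j⟫ = -1 / ((K : ℝ) - 1))
    (k : Fin K) (h : EuclideanSpace ℝ (Fin d)) (δ : ℝ) (hδ : 0 < δ)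
    (η : EuclideanSpace ℝ (Fin d)) (hη : ∀ j, ⟪w j, η⟫ = 0) :
    Real.exp ⟪w k, h + δ • w k + η⟫ / (∑ j, Real.exp ⟪w j, h + δ • w k + η⟫) >
    Real.exp ⟪w k, h⟫ / (∑ j, Real.exp ⟪w j, h⟫) := by
  set a : Fin K → ℝ := fun j => ⟪w j, h⟫ with ha
  have hc : ∀ j, ⟪w j, h + δ • w k + η⟫
      = a j + δ * (if j = k then 1 else -1 / ((K : ℝ) - 1)) := by
    intro j
    rw [inner_add_right, inner_add_right, real_inner_smul_right, hη]
    by_cases hj : j = k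
    · subst hj
      have : ⟪w j, w j⟫ = 1 := by
        rw [real_inner_self_eq_norm_sq, hnorm]; norm_num
      simp only [this, ha, if_pos rfl, if_true, mul_one, add_zero]
    · rw [hETF j k hj]
      simp only [if_neg hj, ha, add_zero]
  have hkey : ⟪w k, h + δ • w k + η⟫ = a k + δ := by rw [hc]; simp only [if_pos rfl, if_true, mul_one]
  have hS : 0 < ∑ j, Real.exp (a j) :=
    Finset.sum_pos (fun j _ => Real.exp_pos _) ⟨k, Finset.mem_univ k⟩
  have hS' : 0 < ∑ j, Real.exp ⟪w j, h + δ • w k + η⟫ :=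
    Finset.sum_pos (fun j _ => Real.exp_pos _) ⟨k, Finset.mem_univ k⟩
  rw [gt_iff_lt, div_lt_div_iff₀ hS hS', hkey]
  rw [Finset.mul_sum, Finset.mul_sum]
  refine Finset.sum_lt_sum (fun j _ => ?_) ?_
  · rw [hc j, ← Real.exp_add, ← Real.exp_add]
    apply Real.exp_le_exp.2
    by_cases hj : j = k
    · simp only [hj, if_pos rfl, if_true, mul_one, ha]; linarith
    · simp only [hj, if_false]
      have h1 : -1 / ((K : ℝ) - 1) ≤ 1 := by
        have : (1 : ℝ) ≤ (K : ℝ) - 1 := by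
          have : (2 : ℝ) ≤ (K : ℝ) := by exact_mod_cast hK
          linarith
        rw [div_le_one (by linarith)]; linarith
      nlinarith
  · obtain ⟨j, hj⟩ : ∃ j : Fin K, j ≠ k := by
      have : 1 < Fintype.card (Fin K) := by simp only [Fintype.card_fin]; omega
      exact Fintype.exists_ne_of_one_lt_card this k
    refine ⟨j, Finset.mem_univ j, ?_⟩
    rw [hc j, ← Real.exp_add, ← Real.exp_add]
    apply Real.exp_lt_exp.2
    simp only [hj, if_false]
    have h1 : -1 / ((K : ℝ) - 1) < 1 := by
      have : (1 : ℝ) ≤ (K : ℝ) - 1 := by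
        have : (2 : ℝ) ≤ (K : ℝ) := by exact_mod_cast hK
        linarith
      rw [div_lt_one (by linarith)]; linarith
    nlinarith
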